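/- Let f : ℝⁿ → ℝ be convex and x₀ ∈ ℝⁿ not a minimizer of f. Let C = {w : f(x₀ + w) ≤ f(x₀)}. Then for any w* ∈ C: if f(x₀ + w*) < f(x₀), then the polar of the tangent cone of C at w* is {0}; if f(x₀ + w*) = f(x₀), then the polar of the tangent cone of C at w* equals cone(∂f(x₀ + w*)). -/

import Mathlib

noncomputable section

/-- The subdifferential of a convex function `f` at `x`. -/
def subdiff {n : ℕ} (f : EuclideanSpace ℝ (Fin n) → ℝ) (x : EuclideanSpace ℝ (Fin n)) :
    Set (EuclideanSpace ℝ (Fin n)) :=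
  {s | ∀ y, f x + (inner ℝ s (y - x) : ℝ) ≤ f y}

/-- The polar cone of a set `K`. -/
def polarCone {n : ℕ} (K : Set (EuclideanSpace ℝ (Fin n))) : Set (EuclideanSpace ℝ (Fin n)) :=
  {u | ∀ v ∈ K, (inner ℝ u v : ℝ) ≤ 0}

/-- The conic hull of a set `S`. -/
def coneHull {n : ℕ} (S : Set (EuclideanSpace ℝ (Fin n))) : Set (EuclideanSpace ℝ (Fin n)) :=
  {v | ∃ c : ℝ, 0 ≤ c ∧ ∃ s ∈ S, v = c • s}

/-- The tangent cone of a set `C` at `x`: closure of the cone of feasible directions. -/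
def tangentConeOf {n : ℕ} (C : Set (EuclideanSpace ℝ (Fin n))) (x : EuclideanSpace ℝ (Fin n)) :
    Set (EuclideanSpace ℝ (Fin n)) :=
  closure {v | ∃ c : ℝ, 0 ≤ c ∧ ∃ u, x + u ∈ C ∧ v = c • u}


open Set Pointwise

variable {n : ℕ}

local notation "E" => EuclideanSpace ℝ (Fin n)

/-- difference quotient of `f` at `x` in direction `v`. -/
def qslope (f : E → ℝ) (x v : E) (t : ℝ) : ℝ := (f (x + t • v) - f x) / t

lemma convexOn_line {f : E → ℝ} (hf : ConvexOn ℝ Set.univ f) (x v : E) :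
    ConvexOn ℝ Set.univ (fun t : ℝ => f (x + t • v)) := by
  have h := hf.comp_affineMap (AffineMap.lineMap x (x + v) : ℝ →ᵃ[ℝ] E)
  have : ((AffineMap.lineMap x (x + v) : ℝ →ᵃ[ℝ] E) ⁻¹' Set.univ) = Set.univ := by simp
  rw [this] at h
  convert h using 2 with t
  case e'_12 => simp [AffineMap.lineMap_apply, add_comm]
  all_goals rfl

lemma qslope_mono {f : E → ℝ} (hf : ConvexOn ℝ Set.univ f) (x v : E) {s t : ℝ}
    (hs : s ≠ 0) (ht : t ≠ 0) (hst : s ≤ t) :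
    qslope f x v s ≤ qslope f x v t := by
  have hg := convexOn_line hf x v
  have hm := hg.slope_mono (Set.mem_univ (0:ℝ))
  have h := hm (by simp [hs]) (by simp [ht]) hst
  simpa [slope_def_field, qslope, div_eq_mul_inv] using h

lemma qslope_bddBelow {f : E → ℝ} (hf : ConvexOn ℝ Set.univ f) (x v : E) :
    ∀ t > (0:ℝ), f x - f (x - v) ≤ qslope f x v t := by
  intro t ht
  have := qslope_mono hf x v (s := -1) (t := t) (by norm_num) (ne_of_gt ht) (by linarith)
  have h1 : qslope f x v (-1) = f x - f (x - v) := by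
    simp [qslope, sub_eq_add_neg, neg_smul]
    ring
  linarith [h1 ▸ this]

/-- one-sided directional derivative (as inf of slopes) -/
def ddf (f : E → ℝ) (x v : E) : ℝ := sInf (qslope f x v '' Set.Ioi 0)

lemma ddf_le {f : E → ℝ} (hf : ConvexOn ℝ Set.univ f) (x v : E) {t : ℝ} (ht : 0 < t) :
    ddf f x v ≤ qslope f x v t := by
  apply csInf_le _ (Set.mem_image_of_mem _ ht)
  exact ⟨f x - f (x - v), by rintro _ ⟨r, hr, rfl⟩; exact qslope_bddBelow hf x v r hr⟩

lemma ddf_zero {f : E → ℝ} (x : E) : ddf f x 0 = 0 := by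
  have : qslope f x 0 '' Set.Ioi 0 = {0} := by
    ext r
    constructor
    · rintro ⟨t, ht, rfl⟩; simp [qslope]
    · rintro rfl; exact ⟨1, by norm_num, by simp [qslope]⟩
  rw [ddf, this, csInf_singleton]

lemma qslope_smul (f : E → ℝ) (x v : E) {c : ℝ} (hc : 0 < c) (t : ℝ) (ht : 0 < t) :
    qslope f x (c • v) t = c * qslope f x v (t * c) := by
  have htc : t * c ≠ 0 := by positivity
  rw [qslope, qslope, smul_smul]
  field_simp

lemma ddf_smul {f : E → ℝ} (hf : ConvexOn ℝ Set.univ f) (x v : E) {c : ℝ} (hc : 0 < c) :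
    ddf f x (c • v) = c * ddf f x v := by
  have himg : qslope f x (c • v) '' Set.Ioi 0 = (fun r => c * r) '' (qslope f x v '' Set.Ioi 0) := by
    ext r
    constructor
    · rintro ⟨t, ht, rfl⟩
      rw [Set.mem_Ioi] at ht
      exact ⟨qslope f x v (t * c), ⟨t * c, Set.mem_Ioi.2 (by positivity), rfl⟩,
        (qslope_smul f x v hc t ht).symm⟩
    · rintro ⟨_, ⟨t, ht, rfl⟩, rfl⟩
      rw [Set.mem_Ioi] at ht
      refine ⟨t / c, Set.mem_Ioi.2 (by positivity), ?_⟩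
      rw [qslope_smul f x v hc _ (by positivity), div_mul_cancel₀]
      exact ne_of_gt hc
  rw [ddf, himg, ddf]
  have : (fun r => c * r) '' (qslope f x v '' Set.Ioi 0) = c • (qslope f x v '' Set.Ioi 0) := rfl
  rw [this, Real.sInf_smul_of_nonneg hc.le, smul_eq_mul]

lemma qslope_add {f : E → ℝ} (hf : ConvexOn ℝ Set.univ f) (x u v : E) {t : ℝ} (ht : 0 < t) :
    qslope f x (u + v) t ≤ qslope f x u (2 * t) + qslope f x v (2 * t) := by
  have key : f (x + t • (u + v)) ≤ (1/2 : ℝ) * f (x + (2*t) • u) + (1/2 : ℝ) * f (x + (2*t) • v) := by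
    have h := hf.2 (Set.mem_univ (x + (2*t) • u)) (Set.mem_univ (x + (2*t) • v))
      (by norm_num : (0:ℝ) ≤ 1/2) (by norm_num : (0:ℝ) ≤ 1/2) (by norm_num)
    have heq : (1/2 : ℝ) • (x + (2*t) • u) + (1/2 : ℝ) • (x + (2*t) • v) = x + t • (u + v) := by
      module
    rw [heq] at h
    simpa [smul_eq_mul] using h
  rw [qslope, qslope, qslope, ← add_div, div_le_div_iff₀ ht (by positivity)]
  nlinarith

lemma ddf_add {f : E → ℝ} (hf : ConvexOn ℝ Set.univ f) (x u v : E) :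
    ddf f x (u + v) ≤ ddf f x u + ddf f x v := by
  refine le_of_forall_pos_le_add fun ε hε => ?_
  obtain ⟨a, ⟨s, hs, rfl⟩, has⟩ := exists_lt_of_csInf_lt
    (Set.Nonempty.image _ ⟨1, Set.mem_Ioi.2 one_pos⟩) (show ddf f x u < ddf f x u + ε/2 by linarith)
  obtain ⟨b, ⟨r, hr, rfl⟩, hbr⟩ := exists_lt_of_csInf_lt
    (Set.Nonempty.image _ ⟨1, Set.mem_Ioi.2 one_pos⟩) (show ddf f x v < ddf f x v + ε/2 by linarith)
  rw [Set.mem_Ioi] at hs hr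
  set t := min s r / 2 with htdef
  have ht : 0 < t := by positivity
  have h2ts : 2 * t ≤ s := by
    rw [htdef]; have := min_le_left s r; linarith
  have h2tr : 2 * t ≤ r := by
    rw [htdef]; have := min_le_right s r; linarith
  calc ddf f x (u + v) ≤ qslope f x (u + v) t := ddf_le hf x (u+v) ht
    _ ≤ qslope f x u (2*t) + qslope f x v (2*t) := qslope_add hf x u v ht
    _ ≤ qslope f x u s + qslope f x v r := by
        gcongr <;> [exact qslope_mono hf x u (by positivity) (ne_of_gt hs) h2ts;
          exact qslope_mono hf x v (by positivity) (ne_of_gt hr) h2tr]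
    _ ≤ ddf f x u + ε/2 + (ddf f x v + ε/2) := by linarith
    _ = ddf f x u + ddf f x v + ε := by ring

lemma maxFormula {f : E → ℝ} (hf : ConvexOn ℝ Set.univ f) (x : E) {v : E} (hv : v ≠ 0) :
    ∃ g ∈ subdiff f x, (inner ℝ g v : ℝ) = ddf f x v := by
  set pm := LinearPMap.mkSpanSingleton (K := ℝ) (σ := RingHom.id ℝ) v (ddf f x v) hv with hpm
  have hNhom : ∀ c : ℝ, 0 < c → ∀ u, ddf f x (c • u) = c * ddf f x u :=
    fun c hc u => ddf_smul hf x u hc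
  have hNadd : ∀ u w, ddf f x (u + w) ≤ ddf f x u + ddf f x w := ddf_add hf x
  have hpmle : ∀ z : pm.domain, pm z ≤ ddf f x z := by
    rintro ⟨z, hz⟩
    obtain ⟨c, rfl⟩ := Submodule.mem_span_singleton.1 hz
    have happ : pm ⟨c • v, hz⟩ = c • ddf f x v := LinearPMap.mkSpanSingleton'_apply _ _ _ c _
    rw [happ]
    rcases lt_trichotomy c 0 with hc | hc | hc
    · have h1 : ddf f x (c • v) = (-c) * ddf f x (-v) := by
        have : c • v = (-c) • (-v) := by module
        rw [this, ddf_smul hf x (-v) (by linarith)]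
      have h2 : 0 ≤ ddf f x v + ddf f x (-v) := by
        have := ddf_add hf x v (-v)
        rw [add_neg_cancel, ddf_zero] at this
        linarith
      rw [h1, smul_eq_mul]
      nlinarith
    · simp [hc, ddf_zero]
    · rw [ddf_smul hf x v hc, smul_eq_mul]
  obtain ⟨g, hgext, hgle⟩ := exists_extension_of_le_sublinear pm (ddf f x) hNhom hNadd hpmle
  have hgcont : Continuous g := g.continuous_of_finiteDimensional
  set G := (InnerProductSpace.toDual ℝ E).symm ⟨g, hgcont⟩ with hG
  have hGapp : ∀ y, (inner ℝ G y : ℝ) = g y := fun y => InnerProductSpace.toDual_symm_apply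
  refine ⟨G, ?_, ?_⟩
  · intro y
    have h1 : g (y - x) ≤ ddf f x (y - x) := hgle _
    have h2 : ddf f x (y - x) ≤ qslope f x (y - x) 1 := ddf_le hf x _ one_pos
    have h3 : qslope f x (y - x) 1 = f y - f x := by simp [qslope]
    rw [hGapp]
    linarith
  · rw [hGapp]
    have := hgext ⟨v, Submodule.mem_span_singleton_self v⟩
    rw [this, LinearPMap.mkSpanSingleton_apply]

lemma subdiff_isClosed (f : E → ℝ) (x : E) : IsClosed (subdiff f x) := by
  have : subdiff f x = ⋂ y, {s : E | f x + (inner ℝ s (y - x) : ℝ) ≤ f y} := by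
    ext s; simp [subdiff, Set.mem_iInter]
  rw [this]
  exact isClosed_iInter fun y => isClosed_le
    (continuous_const.add (Continuous.inner continuous_id continuous_const)) continuous_const

lemma subdiff_convex (f : E → ℝ) (x : E) : Convex ℝ (subdiff f x) := by
  intro s₁ hs₁ s₂ hs₂ a b ha hb hab
  intro y
  have h1 := hs₁ y
  have h2 := hs₂ y
  have : (inner ℝ (a • s₁ + b • s₂) (y - x) : ℝ)
      = a * (inner ℝ s₁ (y - x) : ℝ) + b * (inner ℝ s₂ (y - x) : ℝ) := by
    rw [inner_add_left, real_inner_smul_left, real_inner_smul_left]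
  rw [this]
  have h1' : a * f x + a * (inner ℝ s₁ (y - x) : ℝ) ≤ a * f y := by
    nlinarith [mul_le_mul_of_nonneg_left h1 ha]
  have h2' : b * f x + b * (inner ℝ s₂ (y - x) : ℝ) ≤ b * f y := by
    nlinarith [mul_le_mul_of_nonneg_left h2 hb]
  have e1 : a * f x + b * f x = f x := by rw [← add_mul, hab, one_mul]
  have e2 : a * f y + b * f y = f y := by rw [← add_mul, hab, one_mul]
  linarith

lemma subdiff_isCompact {f : E → ℝ} (hf : ConvexOn ℝ Set.univ f) (x : E) :
    IsCompact (subdiff f x) := by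
  have hcont : Continuous f := by
    exact continuousOn_univ.1 (hf.continuousOn isOpen_univ)
  obtain ⟨z, _, hz'⟩ := (isCompact_closedBall x 1).exists_isMaxOn
    ⟨x, Metric.mem_closedBall_self zero_le_one⟩ hcont.continuousOn
  have hz : ∀ y ∈ Metric.closedBall x 1, f y ≤ f z := fun y hy => hz' hy
  have hbound : ∀ g ∈ subdiff f x, ‖g‖ ≤ f z - f x := by
    intro g hg
    rcases eq_or_ne g 0 with rfl | hgne
    · simp
      linarith [hz x (Metric.mem_closedBall_self zero_le_one)]
    · have hn : (0:ℝ) < ‖g‖ := norm_pos_iff.2 hgne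
      have hmem : x + ‖g‖⁻¹ • g ∈ Metric.closedBall x 1 := by
        rw [Metric.mem_closedBall, dist_eq_norm, add_sub_cancel_left, norm_smul,
          norm_inv, norm_norm, inv_mul_cancel₀ (ne_of_gt hn)]
      have h1 := hg (x + ‖g‖⁻¹ • g)
      rw [add_sub_cancel_left, real_inner_smul_right, real_inner_self_eq_norm_sq] at h1
      have h2 : ‖g‖⁻¹ * ‖g‖^2 = ‖g‖ := by field_simp
      rw [h2] at h1
      have := hz _ hmem
      linarith
  apply Metric.isCompact_of_isClosed_isBounded (subdiff_isClosed f x)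
  exact (Metric.isBounded_closedBall (x := (0:E)) (r := f z - f x)).subset
    fun g hg => by simpa [Metric.mem_closedBall, dist_eq_norm] using hbound g hg

lemma coneHull_convex {A : Set E} (hA : Convex ℝ A) (hne : A.Nonempty) :
    Convex ℝ (coneHull A) := by
  rintro _ ⟨c₁, hc₁, g₁, hg₁, rfl⟩ _ ⟨c₂, hc₂, g₂, hg₂, rfl⟩ a b ha hb hab
  rcases eq_or_lt_of_le (show (0:ℝ) ≤ a * c₁ + b * c₂ by positivity) with h0 | hpos
  · obtain ⟨g, hg⟩ := hne
    refine ⟨0, le_refl 0, g, hg, ?_⟩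
    have hac : a * c₁ = 0 := by nlinarith
    have hbc : b * c₂ = 0 := by nlinarith
    rw [smul_smul, smul_smul, hac, hbc]
    simp
  · set s := a * c₁ + b * c₂
    refine ⟨s, le_of_lt hpos, (a * c₁ / s) • g₁ + (b * c₂ / s) • g₂, ?_, ?_⟩
    · exact hA hg₁ hg₂ (by positivity) (by positivity)
        (by field_simp; rfl)
    · have hs : s ≠ 0 := ne_of_gt hpos
      rw [smul_add, smul_smul, smul_smul, smul_smul, smul_smul]
      congr 1 <;> congr 1 <;> field_simp

lemma coneHull_isClosed {A : Set E} (hA : IsCompact A) (hne : A.Nonempty) (h0 : 0 ∉ A) :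
    IsClosed (coneHull A) := by
  -- minimum norm on A is positive
  obtain ⟨g₀, hg₀A, hg₀min⟩ := hA.exists_isMinOn hne continuous_norm.continuousOn
  set m := ‖g₀‖ with hm
  have hmpos : 0 < m := norm_pos_iff.2 fun h => h0 (h ▸ hg₀A)
  have hmle : ∀ g ∈ A, m ≤ ‖g‖ := fun g hg => hg₀min hg
  rw [← closure_subset_iff_isClosed]
  intro z hz
  set r := ‖z‖ + 1 with hr
  have hrpos : 0 < r := by positivity
  -- the compact "truncated cone"
  set S := (fun p : ℝ × E => p.1 • p.2) '' (Set.Icc (0:ℝ) (r/m) ×ˢ A) with hS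
  have hScomp : IsCompact S := ((isCompact_Icc).prod hA).image (continuous_smul)
  have hSsub : coneHull A ∩ Metric.ball z 1 ⊆ S := by
    rintro k ⟨⟨c, hc, g, hg, rfl⟩, hkball⟩
    refine ⟨(c, g), ⟨⟨hc, ?_⟩, hg⟩, rfl⟩
    have hnorm : ‖c • g‖ < r := by
      have := mem_ball_iff_norm.1 hkball
      calc ‖c • g‖ = ‖c • g - z + z‖ := by rw [sub_add_cancel]
        _ ≤ ‖c • g - z‖ + ‖z‖ := norm_add_le _ _
        _ < 1 + ‖z‖ := by linarith
        _ = r := by rw [hr]; ring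
    have h1 : c * m ≤ c * ‖g‖ := mul_le_mul_of_nonneg_left (hmle g hg) hc
    have h2 : c * ‖g‖ = ‖c • g‖ := by rw [norm_smul, Real.norm_of_nonneg hc]
    rw [le_div_iff₀ hmpos]
    nlinarith
  have hzS : z ∈ S := by
    have : z ∈ closure (coneHull A ∩ Metric.ball z 1) := by
      rw [mem_closure_iff] at hz ⊢
      intro O hO hzO
      obtain ⟨y, hy, hyK⟩ := hz (O ∩ Metric.ball z 1)
        (hO.inter Metric.isOpen_ball) ⟨hzO, Metric.mem_ball_self one_pos⟩
      exact ⟨y, hy.1, hyK, hy.2⟩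
    have := closure_mono hSsub this
    rwa [hScomp.isClosed.closure_eq] at this
  obtain ⟨⟨c, g⟩, ⟨⟨hc0, _⟩, hgA⟩, rfl⟩ := hzS
  exact ⟨c, hc0, g, hgA, rfl⟩

lemma ddf_neg_feasible {f : E → ℝ} (hf : ConvexOn ℝ Set.univ f) (x v : E)
    (h : ddf f x v < 0) : ∃ t : ℝ, 0 < t ∧ f (x + t • v) < f x := by
  obtain ⟨a, ⟨t, ht, rfl⟩, hat⟩ := exists_lt_of_csInf_lt
    (Set.Nonempty.image _ ⟨1, Set.mem_Ioi.2 one_pos⟩) h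
  rw [Set.mem_Ioi] at ht
  refine ⟨t, ht, ?_⟩
  rw [qslope, div_neg_iff] at hat
  rcases hat with ⟨h1, h2⟩ | ⟨h1, h2⟩ <;> linarith

theorem stmt6 {n : ℕ} (f : EuclideanSpace ℝ (Fin n) → ℝ) (hf : ConvexOn ℝ Set.univ f)
    (x₀ : EuclideanSpace ℝ (Fin n)) (hmin : ∃ y, f y < f x₀)
    (w : EuclideanSpace ℝ (Fin n)) (hw : f (x₀ + w) ≤ f x₀) :
    (f (x₀ + w) < f x₀ →
      polarCone (tangentConeOf {u | f (x₀ + u) ≤ f x₀} w) = {0}) ∧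
    (f (x₀ + w) = f x₀ →
      polarCone (tangentConeOf {u | f (x₀ + u) ≤ f x₀} w) = coneHull (subdiff f (x₀ + w))) := by
  constructor
  · -- strict case
    intro hlt
    ext s
    simp only [Set.mem_singleton_iff]
    constructor
    · intro hs
      have hall : ∀ d : EuclideanSpace ℝ (Fin n),
          d ∈ tangentConeOf {u | f (x₀ + u) ≤ f x₀} w := by
        intro d
        apply subset_closure
        set a := f (x₀ + w) with ha
        set b := f (x₀ + w + d) with hb
        set M := f x₀ with hM
        set t := min 1 ((M - a)/(|b - a| + 1)) with htdef
        have hden : (0:ℝ) < |b - a| + 1 := by positivity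
        have ht0 : 0 < t := lt_min one_pos (div_pos (by linarith) hden)
        have ht1 : t ≤ 1 := min_le_left _ _
        have ht2 : t ≤ (M - a)/(|b - a| + 1) := min_le_right _ _
        have hconv := hf.2 (Set.mem_univ (x₀ + w)) (Set.mem_univ (x₀ + w + d))
          (by linarith : (0:ℝ) ≤ 1 - t) ht0.le (by ring)
        have heqv : (1 - t) • (x₀ + w) + t • (x₀ + w + d) = x₀ + (w + t • d) := by module
        rw [heqv] at hconv
        have htD : t * (|b - a| + 1) ≤ M - a := by
          rw [← le_div_iff₀ hden]; exact ht2
        have hexp : t * (|b - a| + 1) = t * |b - a| + t := by ring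
        have hb1 : t * b ≤ t * a + t * |b - a| := by
          nlinarith [le_abs_self (b - a)]
        have hfeas : f (x₀ + (w + t • d)) ≤ f x₀ := by
          have hc : f (x₀ + (w + t • d)) ≤ (1 - t) * a + t * b := by
            simpa [smul_eq_mul, ha, hb] using hconv
          nlinarith
        exact ⟨t⁻¹, by positivity, t • d, hfeas,
          by rw [smul_smul, inv_mul_cancel₀ (ne_of_gt ht0), one_smul]⟩
      have h1 := hs s (hall s)
      rw [real_inner_self_eq_norm_sq] at h1
      have h2 : ‖s‖ ^ 2 = 0 := le_antisymm (by nlinarith) (sq_nonneg _)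
      exact norm_eq_zero.1 (pow_eq_zero_iff two_ne_zero |>.1 h2)
    · rintro rfl
      intro v _
      simp
  · -- equality case
    intro heq
    obtain ⟨y₀, hy₀⟩ := hmin
    have hy₀ne : y₀ - x₀ ≠ 0 := sub_ne_zero.2 fun h => absurd (h ▸ hy₀) (lt_irrefl _)
    obtain ⟨g₁, hg₁, -⟩ := maxFormula hf (x₀ + w) hy₀ne
    have hAne : (subdiff f (x₀ + w)).Nonempty := ⟨g₁, hg₁⟩
    have hAcomp := subdiff_isCompact hf (x₀ + w)
    have h0A : (0 : EuclideanSpace ℝ (Fin n)) ∉ subdiff f (x₀ + w) := by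
      intro h0
      have h1 := h0 y₀
      rw [inner_zero_left] at h1
      rw [heq] at h1
      linarith
    have hKclosed := coneHull_isClosed hAcomp hAne h0A
    have hKconv := coneHull_convex (subdiff_convex f (x₀ + w)) hAne
    have h0K : (0 : EuclideanSpace ℝ (Fin n)) ∈ coneHull (subdiff f (x₀ + w)) :=
      ⟨0, le_refl 0, g₁, hg₁, (zero_smul _ _).symm⟩
    ext s
    constructor
    · intro hs
      by_contra hsK
      obtain ⟨φ, u, hφK, hφs⟩ := geometric_hahn_banach_closed_point hKconv hKclosed hsK
      set d := (InnerProductSpace.toDual ℝ (EuclideanSpace ℝ (Fin n))).symm φ with hd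
      have hdapp : ∀ y, (inner ℝ d y : ℝ) = φ y := fun y => InnerProductSpace.toDual_symm_apply
      have hu0 : 0 < u := by have := hφK 0 h0K; rwa [map_zero] at this
      have hφA : ∀ g ∈ subdiff f (x₀ + w), φ g ≤ 0 := by
        intro g hg
        by_contra hpos
        push_neg at hpos
        have hmem : ((u / φ g + 1) • g) ∈ coneHull (subdiff f (x₀ + w)) :=
          ⟨u / φ g + 1, by positivity, g, hg, rfl⟩
        have hlt := hφK _ hmem
        rw [map_smul, smul_eq_mul] at hlt
        have hcalc : (u / φ g + 1) * φ g = u + φ g := by field_simp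
        rw [hcalc] at hlt
        linarith
      obtain ⟨ψ, u', hψA, hψ0⟩ := geometric_hahn_banach_closed_point
        (subdiff_convex f (x₀ + w)) hAcomp.isClosed h0A
      set e := (InnerProductSpace.toDual ℝ (EuclideanSpace ℝ (Fin n))).symm ψ with he
      have heapp : ∀ y, (inner ℝ e y : ℝ) = ψ y := fun y => InnerProductSpace.toDual_symm_apply
      have hu' : u' < 0 := by rwa [map_zero] at hψ0
      have hkey : ∀ ε : ℝ, 0 < ε → (inner ℝ s (d + ε • e) : ℝ) ≤ 0 := by
        intro ε hε
        rcases eq_or_ne (d + ε • e) 0 with hde | hde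
        · rw [hde, inner_zero_right]
        · obtain ⟨g', hg', hinner⟩ := maxFormula hf (x₀ + w) hde
          have h1 : (inner ℝ g' (d + ε • e) : ℝ) < 0 := by
            rw [inner_add_right, real_inner_smul_right]
            have hga : (inner ℝ g' d : ℝ) ≤ 0 := by
              rw [real_inner_comm, hdapp]; exact hφA _ hg'
            have hgb : (inner ℝ g' e : ℝ) < u' := by
              rw [real_inner_comm, heapp]; exact hψA _ hg'
            nlinarith
          rw [hinner] at h1
          obtain ⟨t, ht, hflt⟩ := ddf_neg_feasible hf _ _ h1
          have hmem : (d + ε • e) ∈ tangentConeOf {u | f (x₀ + u) ≤ f x₀} w := by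
            apply subset_closure
            refine ⟨t⁻¹, by positivity, t • (d + ε • e), ?_,
              by rw [smul_smul, inv_mul_cancel₀ (ne_of_gt ht), one_smul]⟩
            show f (x₀ + (w + t • (d + ε • e))) ≤ f x₀
            rw [← add_assoc]
            rw [← heq]
            exact hflt.le
          exact hs _ hmem
      have hsd : (inner ℝ s d : ℝ) ≤ 0 := by
        by_contra hp
        push_neg at hp
        set B := (inner ℝ s e : ℝ) with hB
        set ε := (inner ℝ s d : ℝ) / (|B| + 1) with hε'
        have hden : (0:ℝ) < |B| + 1 := by positivity
        have hε : 0 < ε := div_pos hp hden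
        have hk := hkey ε hε
        rw [inner_add_right, real_inner_smul_right] at hk
        have hεD : ε * (|B| + 1) = (inner ℝ s d : ℝ) := div_mul_cancel₀ _ (ne_of_gt hden)
        nlinarith [mul_nonneg hε.le (by linarith [neg_abs_le B] : (0:ℝ) ≤ B + |B|)]
      have hcontra : (0:ℝ) < (inner ℝ s d : ℝ) := by
        rw [real_inner_comm, hdapp]; linarith
      linarith
    · rintro ⟨c, hc, g, hg, rfl⟩
      intro v hv
      have hclosed : IsClosed {v : EuclideanSpace ℝ (Fin n) | (inner ℝ (c • g) v : ℝ) ≤ 0} :=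
        isClosed_le (Continuous.inner continuous_const continuous_id) continuous_const
      refine closure_minimal ?_ hclosed hv
      rintro _ ⟨c', hc', u, hu, rfl⟩
      simp only [Set.mem_setOf_eq]
      rw [real_inner_smul_left, real_inner_smul_right]
      have hgu : (inner ℝ g u : ℝ) ≤ 0 := by
        have h1 := hg (x₀ + w + u)
        rw [add_sub_cancel_left] at h1
        have h2 : f (x₀ + w + u) ≤ f x₀ := by rw [add_assoc]; exact hu
        rw [heq] at h1
        linarith
      nlinarith [mul_nonneg hc hc']
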